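/- Let K be a conjugacy class of a finite group G such that KK⁻¹ = {1} ∪ D where D is a conjugacy class with |D| = |K| − 1. Then ⟨D⟩ = {1} ∪ D, and ⟨D⟩ is an elementary abelian p-group for some prime p; consequently ⟨K⟩ is metabelian. -/

import Mathlib

open scoped Pointwise

theorem closure_D_elementary_abelian_of_card_eq_sub_one
    {G : Type*} [Group G] [Finite G] (x d : G)
    (h : conjugatesOf x * (conjugatesOf x)⁻¹ = {1} ∪ conjugatesOf d)
    (hcard : (conjugatesOf d).ncard = (conjugatesOf x).ncard - 1) :
    (Subgroup.closure (conjugatesOf d) : Set G) = {1} ∪ conjugatesOf d ∧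
    (∃ p : ℕ, p.Prime ∧
      (∀ a ∈ Subgroup.closure (conjugatesOf d), ∀ b ∈ Subgroup.closure (conjugatesOf d),
        a * b = b * a) ∧
      (∀ a ∈ Subgroup.closure (conjugatesOf d), a ^ p = 1)) ∧
    derivedSeries (↥(Subgroup.closure (conjugatesOf x))) 2 = ⊥ := by
  classical
  set K := conjugatesOf x with hKdef
  set D := conjugatesOf d with hDdef
  set S : Set G := {1} ∪ D with hSdef
  have hdD : d ∈ D := mem_conjugatesOf_self
  have hxK : x ∈ K := mem_conjugatesOf_self
  have hDfin : D.Finite := Set.toFinite _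
  have hKfin : K.Finite := Set.toFinite _
  have hDpos : 1 ≤ D.ncard := (Set.ncard_pos hDfin).mpr ⟨d, hdD⟩
  -- 1 ∉ D
  have h1D : (1 : G) ∉ D := by
    intro h1
    have hd1 : d = 1 := isConj_one_left.mp h1
    have hD1 : D = {1} := by
      ext b
      constructor
      · intro hb
        have : IsConj d b := hb
        rw [hd1] at this
        simpa using isConj_one_right.mp this
      · rintro rfl
        exact h1
    have hS1 : S = {1} := by rw [hSdef, hD1, Set.union_self]
    have hKx : K = {x} := by
      apply subset_antisymm
      · intro b hb
        have : x * b⁻¹ ∈ K * K⁻¹ := Set.mul_mem_mul hxK (Set.inv_mem_inv.mpr hb)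
        rw [h, hS1] at this
        simp only [Set.mem_singleton_iff] at this
        have hbx : b = x := (mul_inv_eq_one.mp this).symm
        simp [hbx]
      · intro b hb
        simp only [Set.mem_singleton_iff] at hb
        rw [hb]; exact hxK
    have hK1 : K.ncard = 1 := by rw [hKx]; simp
    omega
  have hKpos : 2 ≤ K.ncard := by omega
  have hScard : S.ncard = K.ncard := by
    rw [hSdef, Set.ncard_union_eq (by simpa using h1D) (Set.finite_singleton 1) hDfin]
    simp only [Set.ncard_singleton]
    omega
  -- for each a ∈ K, a • K⁻¹ = S
  have hK_mul : ∀ a ∈ K, a • K⁻¹ = S := by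
    intro a ha
    apply Set.eq_of_subset_of_ncard_le
    · rintro y ⟨t, ht, rfl⟩
      rw [← h]
      exact Set.mul_mem_mul ha ht
    · rw [Set.ncard_smul_set, Set.ncard_inv, hScard]
    · exact Set.toFinite _
  have hSone : (1 : G) ∈ S := Or.inl rfl
  have hSinv : ∀ s ∈ S, s⁻¹ ∈ S := by
    intro s hs
    rw [← h] at hs ⊢
    obtain ⟨a, ha, b, hb, rfl⟩ := hs
    rw [mul_inv_rev]
    exact Set.mul_mem_mul (Set.mem_inv.mp hb) (Set.inv_mem_inv.mpr ha)
  have hSmul : ∀ s ∈ S, ∀ t ∈ S, s * t ∈ S := by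
    intro s hs t ht
    rw [← h] at hs
    obtain ⟨a, ha, b, hb, rfl⟩ := hs
    have hbK : b⁻¹ ∈ K := by simpa using hb
    rw [← hK_mul b⁻¹ hbK] at ht
    obtain ⟨c, hc, rfl⟩ := ht
    have : a * b * (b⁻¹ • c) = a * c := by simp only [smul_eq_mul]; group
    rw [this, ← h]
    exact Set.mul_mem_mul ha hc
  -- S as a subgroup
  let Sgrp : Subgroup G :=
    { carrier := S
      one_mem' := hSone
      mul_mem' := fun {a b} ha hb => hSmul a ha b hb
      inv_mem' := fun {a} ha => hSinv a ha }
  have hmemS : ∀ a : G, a ∈ Sgrp ↔ a ∈ S := fun a => Iff.rfl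
  -- closure D = S
  have hclosD : (Subgroup.closure D : Set G) = S := by
    apply subset_antisymm
    · exact (Subgroup.closure_le Sgrp).mpr (fun a ha => Or.inr ha)
    · intro a ha
      rcases ha with ha | ha
      · simp only [Set.mem_singleton_iff] at ha
        rw [ha]; exact SetLike.mem_coe.mpr (Subgroup.one_mem _)
      · exact Subgroup.subset_closure ha
  have hmemC : ∀ a : G, a ∈ Subgroup.closure D ↔ a ∈ S := by
    intro a
    rw [← SetLike.mem_coe, hclosD]
  -- normality of S
  have hSconj : ∀ (g s : G), s ∈ S → g * s * g⁻¹ ∈ S := by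
    intro g s hs
    rcases hs with hs | hs
    · simp only [Set.mem_singleton_iff] at hs
      rw [hs]; simpa using hSone
    · right
      exact (hs : IsConj d s).trans (isConj_iff.mpr ⟨g, rfl⟩)
  haveI hSnormal : Sgrp.Normal := ⟨fun s hs g => hSconj g s hs⟩
  -- all elements of D have the same order
  have horder_conj : ∀ a b : G, IsConj a b → orderOf a = orderOf b := by
    intro a b hab
    obtain ⟨c, rfl⟩ := isConj_iff.mp hab
    exact SemiconjBy.orderOf_eq c (by simp only [SemiconjBy]; group)
  have hd1 : d ≠ 1 := fun hd => h1D (hd ▸ hdD)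
  set p := orderOf d with hpdef
  have hp1 : p ≠ 1 := by
    intro hp
    exact hd1 (orderOf_eq_one_iff.mp hp)
  have hp : p.Prime := by
    have hq : p.minFac.Prime := Nat.minFac_prime hp1
    have hpq : p / p.minFac ∣ p := Nat.div_dvd_of_dvd p.minFac_dvd
    have hppos : 0 < p := Nat.pos_of_ne_zero (fun h0 => by
      have := orderOf_pos d
      omega)
    set e := d ^ (p / p.minFac) with hedef
    have he : orderOf e = p.minFac := by
      rw [hedef, orderOf_pow, ← hpdef, Nat.gcd_eq_right hpq,
        Nat.div_div_self p.minFac_dvd hppos.ne']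
    have he1 : e ≠ 1 := by
      intro h1
      rw [h1, orderOf_one] at he
      exact hq.one_lt.ne' he.symm
    have heS : e ∈ S := by
      have : d ∈ Sgrp := Or.inr hdD
      exact Sgrp.pow_mem this _
    have heD : e ∈ D := by
      rcases heS with h1 | h2
      · exact absurd h1 he1
      · exact h2
    have : orderOf e = p := (horder_conj d e heD).symm
    rw [this] at he
    rw [he]
    exact hq
  have hpow : ∀ a ∈ S, a ^ p = 1 := by
    intro a ha
    rcases ha with ha | ha
    · simp only [Set.mem_singleton_iff] at ha
      rw [ha, one_pow]
    · rw [hpdef, horder_conj d a ha]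
      exact pow_orderOf_eq_one a
  -- Sgrp is a nontrivial p-group
  have hPG : IsPGroup p ↥Sgrp := by
    intro g
    refine ⟨1, ?_⟩
    ext
    push_cast
    rw [pow_one]
    exact hpow g.1 g.2
  haveI : Nontrivial ↥Sgrp :=
    ⟨⟨⟨d, Or.inr hdD⟩, 1, fun hh => hd1 (by simpa using congrArg Subtype.val hh)⟩⟩
  haveI : Fact p.Prime := ⟨hp⟩
  haveI hZ : Nontrivial (Subgroup.center ↥Sgrp) := hPG.center_nontrivial
  -- extract a nontrivial central element
  obtain ⟨z, hz1⟩ := exists_ne (1 : Subgroup.center ↥Sgrp)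
  have hz0 : ∀ s ∈ S, (z.1.1 : G) * s = s * z.1.1 := by
    intro s hs
    have := (Subgroup.mem_center_iff.mp z.2) ⟨s, hs⟩
    exact congrArg Subtype.val this |>.symm
  have hz0D : (z.1.1 : G) ∈ D := by
    rcases z.1.2 with h1 | h2
    · exfalso
      apply hz1
      ext
      simpa using h1
    · exact h2
  -- commutativity of S
  have hcommD : ∀ a ∈ D, ∀ b ∈ S, a * b = b * a := by
    intro a ha b hb
    have hconj : IsConj z.1.1 a := ((hz0D : IsConj d _).symm).trans (ha : IsConj d a)
    obtain ⟨g, hg⟩ := isConj_iff.mp hconj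
    have hb' : g⁻¹ * b * g ∈ S := by simpa using hSconj g⁻¹ b hb
    have hcz := hz0 _ hb'
    calc a * b = g * (z.1.1 * (g⁻¹ * b * g)) * g⁻¹ := by rw [← hg]; group
      _ = g * ((g⁻¹ * b * g) * z.1.1) * g⁻¹ := by rw [hcz]
      _ = b * a := by rw [← hg]; group
  have hScomm : ∀ a ∈ S, ∀ b ∈ S, a * b = b * a := by
    intro a ha b hb
    rcases ha with ha | ha
    · simp only [Set.mem_singleton_iff] at ha
      rw [ha, one_mul, mul_one]
    · exact hcommD a ha b hb
  -- metabelian part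
  set H := Subgroup.closure K with hHdef
  have hπ : ∀ g ∈ H, ∃ n : ℤ, (QuotientGroup.mk' Sgrp) g = (QuotientGroup.mk' Sgrp) x ^ n := by
    intro g hg
    induction hg using Subgroup.closure_induction with
    | mem k hk =>
      refine ⟨1, ?_⟩
      rw [zpow_one]
      have hxk : x * k⁻¹ ∈ S := by rw [← h]; exact Set.mul_mem_mul hxK (Set.inv_mem_inv.mpr hk)
      have hinv : k * x⁻¹ ∈ S := by simpa using hSinv _ hxk
      have hxik : x⁻¹ * k ∈ S := by
        have h2 := hSconj x⁻¹ _ hinv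
        simpa [mul_assoc] using h2
      apply (QuotientGroup.eq ).mpr
      exact (hmemS _).mpr (by simpa using hSinv _ hxik)
    | one => exact ⟨0, by simp⟩
    | mul a b _ _ iha ihb =>
      obtain ⟨m, hm⟩ := iha
      obtain ⟨n, hn⟩ := ihb
      exact ⟨m + n, by rw [map_mul, hm, hn, zpow_add]⟩
    | inv a _ iha =>
      obtain ⟨m, hm⟩ := iha
      exact ⟨-m, by rw [map_inv, hm, zpow_neg]⟩
  open scoped commutatorElement in
  have hHS : ∀ g₁ ∈ H, ∀ g₂ ∈ H, ⁅g₁, g₂⁆ ∈ Sgrp := by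
    intro g₁ hg₁ g₂ hg₂
    obtain ⟨m, hm⟩ := hπ g₁ hg₁
    obtain ⟨n, hn⟩ := hπ g₂ hg₂
    have : (QuotientGroup.mk' Sgrp) ⁅g₁, g₂⁆ = 1 := by
      rw [map_commutatorElement, hm, hn, commutatorElement_eq_one_iff_mul_comm,
        ← zpow_add, ← zpow_add, add_comm]
    rwa [← QuotientGroup.ker_mk' Sgrp, MonoidHom.mem_ker]
  have hDS1 : ∀ g : ↥H, g ∈ derivedSeries ↥H 1 → (g : G) ∈ Sgrp := by
    intro g hg
    have hle : (derivedSeries ↥H 1).map H.subtype ≤ Sgrp := by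
      rw [derivedSeries_succ, derivedSeries_zero, Subgroup.map_commutator]
      rw [Subgroup.commutator_le]
      intro g₁ hg₁ g₂ hg₂
      obtain ⟨a, -, rfl⟩ := hg₁
      obtain ⟨b, -, rfl⟩ := hg₂
      exact hHS a a.2 b b.2
    exact hle ⟨g, hg, rfl⟩
  refine ⟨hclosD, ⟨p, hp, ?_, ?_⟩, ?_⟩
  · intro a ha b hb
    exact hScomm a ((hmemC a).mp ha) b ((hmemC b).mp hb)
  · intro a ha
    exact hpow a ((hmemC a).mp ha)
  · show derivedSeries ↥H 2 = ⊥
    rw [show (2 : ℕ) = 1 + 1 from rfl, derivedSeries_succ, eq_bot_iff]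
    refine Subgroup.commutator_le.mpr fun g₁ hg₁ g₂ hg₂ => ?_
    rw [Subgroup.mem_bot, commutatorElement_eq_one_iff_mul_comm]
    have hc := hScomm _ (hDS1 g₁ hg₁) _ (hDS1 g₂ hg₂)
    exact Subtype.ext (by push_cast; exact hc)
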